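/- The hyperplanes H_1,…,H_N associated to pairwise distinct μ_1,…,μ_N ∈ ℂ are in general position: for any indices 1 ≤ j_1 < ⋯ < j_k ≤ N with k ≤ n, the intersection H_{j_1} ∩ ⋯ ∩ H_{j_k} equals {π_n(μ_{j_1},…,μ_{j_k},λ_1,…,λ_{n-k}) : λ ∈ ℂ^{n-k}} and is an (n−k)-dimensional affine subspace. -/

import Mathlib

/-- The symmetrization map `π_n : ℂ^n → ℂ^n`, whose `j`-th coordinate is the
`(j+1)`-st elementary symmetric polynomial of the entries. -/
noncomputable def symPoly (n : ℕ) (lam : Fin n → ℂ) : Fin n → ℂ :=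
  fun j => ∑ t ∈ Finset.powersetCard ((j : ℕ) + 1) Finset.univ, ∏ i ∈ t, lam i

/-- The `n`-fold symmetric product `S_n(D) = π_n(D^n)` of a planar set `D`. -/
noncomputable def symProd (n : ℕ) (D : Set ℂ) : Set (Fin n → ℂ) :=
  symPoly n '' {lam | ∀ i, lam i ∈ D}


/-- The affine hyperplane `H(μ) = {(μ + z₁, μ z₁ + z₂, …, μ z_{n-2} + z_{n-1}, μ z_{n-1})}`
associated to `μ ∈ ℂ`, encoded via an auxiliary tuple `z : Fin (n+1) → ℂ`
with `z 0 = 1` and `z n = 0`. -/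
def hplane (n : ℕ) (μ : ℂ) : Set (Fin n → ℂ) :=
  {v | ∃ z : Fin (n + 1) → ℂ, z 0 = 1 ∧ z (Fin.last n) = 0 ∧
    ∀ j : Fin n, v j = μ * z j.castSucc + z j.succ}

open Polynomial

/-- coefficient vector to monic polynomial -/
noncomputable def pOf (m : ℕ) (v : Fin m → ℂ) : Polynomial ℂ :=
  X ^ m + ∑ j : Fin m, C (v j) * X ^ (m - 1 - (j : ℕ))

lemma coeff_sum_aux (m : ℕ) (v : Fin m → ℂ) (i : Fin m) :
    (∑ j : Fin m, C (v j) * X ^ (m - 1 - (j : ℕ))).coeff (m - 1 - (i : ℕ)) = v i := by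
  rw [finset_sum_coeff, Finset.sum_eq_single i]
  · simp [coeff_C_mul, coeff_X_pow]
  · intro j _ hji
    have hj := j.isLt; have hi := i.isLt
    have hne : (j : ℕ) ≠ (i : ℕ) := fun h => hji (Fin.ext h)
    have hd : ¬ (m - 1 - (i : ℕ) = m - 1 - (j : ℕ)) := by omega
    simp only [coeff_C_mul, coeff_X_pow, if_neg hd, mul_zero]
  · simp

lemma degree_sum_lt (m : ℕ) (v : Fin m → ℂ) :
    (∑ j : Fin m, C (v j) * X ^ (m - 1 - (j : ℕ))).degree < ((m : ℕ) : WithBot ℕ) := by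
  refine lt_of_le_of_lt (Polynomial.degree_sum_le _ _) ?_
  rw [Finset.sup_lt_iff (by exact WithBot.bot_lt_coe m)]
  intro j _
  refine lt_of_le_of_lt (degree_C_mul_X_pow_le _ _) ?_
  have hj := j.isLt
  exact_mod_cast (by omega : m - 1 - (j : ℕ) < m)

lemma pOf_monic (m : ℕ) (v : Fin m → ℂ) : (pOf m v).Monic :=
  monic_X_pow_add (degree_sum_lt m v)

lemma pOf_natDegree (m : ℕ) (v : Fin m → ℂ) : (pOf m v).natDegree = m := by
  have : (pOf m v).degree = (m : ℕ) := by
    rw [pOf, degree_add_eq_left_of_degree_lt (by simpa [degree_X_pow] using degree_sum_lt m v),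
      degree_X_pow]
  exact natDegree_eq_of_degree_eq_some this

lemma coeff_pOf (m : ℕ) (v : Fin m → ℂ) (i : Fin m) :
    (pOf m v).coeff (m - 1 - (i : ℕ)) = v i := by
  have hi := i.isLt
  rw [pOf, coeff_add, coeff_X_pow, if_neg (by omega), coeff_sum_aux, zero_add]

lemma pOf_inj (m : ℕ) {v w : Fin m → ℂ} (h : pOf m v = pOf m w) : v = w := by
  funext i
  rw [← coeff_pOf m v i, ← coeff_pOf m w i, h]

lemma pOf_symPoly (m : ℕ) (lam : Fin m → ℂ) :
    pOf m (symPoly m lam) = ∏ i : Fin m, (X + C (lam i)) := by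
  have hmonic : (∏ i : Fin m, (X + C (lam i))).Monic :=
    monic_prod_of_monic _ _ fun i _ => monic_X_add_C _
  have hdeg : (∏ i : Fin m, (X + C (lam i))).natDegree = m := by
    rw [natDegree_prod _ _ fun i _ => (monic_X_add_C (lam i)).ne_zero]
    simp [natDegree_X_add_C]
  ext d
  rcases lt_trichotomy d m with hd | hd | hd
  · have hdm : d ≤ m := hd.le
    have hcard : d ≤ (Finset.univ : Finset (Fin m)).card := by simpa using hdm
    rw [Finset.prod_X_add_C_coeff _ _ hcard]
    have hi : m - 1 - (m - 1 - d) = d := by omega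
    have hstep : (pOf m (symPoly m lam)).coeff d = symPoly m lam ⟨m - 1 - d, by omega⟩ := by
      have h := coeff_pOf m (symPoly m lam) ⟨m - 1 - d, by omega⟩
      simpa [hi] using h
    rw [hstep]
    have hcnt : m - 1 - d + 1 = m - d := by omega
    simp [symPoly, hcnt]
  · subst hd
    have h1 := (pOf_monic _ (symPoly _ lam)).coeff_natDegree
    rw [pOf_natDegree] at h1
    have h2 := hmonic.coeff_natDegree
    rw [hdeg] at h2
    rw [h1, h2]
  · rw [coeff_eq_zero_of_natDegree_lt (by rw [pOf_natDegree]; exact hd),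
      coeff_eq_zero_of_natDegree_lt (by rw [hdeg]; exact hd)]

lemma hplane_iff_dvd (n : ℕ) (hn : 1 ≤ n) (μ : ℂ) (v : Fin n → ℂ) :
    v ∈ hplane n μ ↔ (X + C μ) ∣ pOf n v := by
  have hXC : X + C μ = X - C (-μ) := by rw [map_neg, sub_neg_eq_add]
  constructor
  · rintro ⟨z, hz0, hzn, hz⟩
    rw [hXC, dvd_iff_isRoot]
    -- evaluation and telescoping
    have heval : (pOf n v).eval (-μ) = (-μ) ^ n + ∑ j : Fin n, v j * (-μ) ^ (n - 1 - (j : ℕ)) := by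
      simp [pOf, eval_finset_sum]
    rw [IsRoot, heval]
    set w : ℕ → ℂ := fun i => if h : i ≤ n then z ⟨i, Nat.lt_succ_of_le h⟩ else 0 with hw
    have hsum : ∑ j : Fin n, v j * (-μ) ^ (n - 1 - (j : ℕ)) =
        ∑ i ∈ Finset.range n, (w (i + 1) * (-μ) ^ (n - (i + 1)) - w i * (-μ) ^ (n - i)) := by
      rw [← Fin.sum_univ_eq_sum_range
        (fun i => w (i + 1) * (-μ) ^ (n - (i + 1)) - w i * (-μ) ^ (n - i)) n]
      apply Finset.sum_congr rfl
      intro jj _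
      obtain ⟨i, hi⟩ := jj
      have hv := hz ⟨i, hi⟩
      have hcs : w i = z (Fin.castSucc ⟨i, hi⟩) := by
        simp only [hw]; rw [dif_pos (by omega)]; rfl
      have hsc : w (i + 1) = z (Fin.succ ⟨i, hi⟩) := by
        simp only [hw]; rw [dif_pos (by omega)]; rfl
      rw [hv, hcs, hsc]
      have h1 : n - (i + 1) = n - 1 - i := by omega
      have h2 : n - i = (n - 1 - i) + 1 := by omega
      rw [h1, h2, pow_succ]
      ring
    rw [hsum, Finset.sum_range_sub (fun i => w i * (-μ) ^ (n - i))]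
    have hwn : w n = 0 := by simp only [hw]; rw [dif_pos le_rfl]; simpa [Fin.last] using hzn
    have hw0 : w 0 = 1 := by simp only [hw]; rw [dif_pos (by omega)]; exact hz0
    rw [hwn, hw0]
    simp
  · intro hdvd
    obtain ⟨R, hR⟩ := hdvd
    have hRmonic : R.Monic := by
      have := pOf_monic n v
      rw [hR] at this
      exact (monic_X_add_C μ).of_mul_monic_left this
    have hRdeg : R.natDegree = n - 1 := by
      have h := pOf_natDegree n v
      rw [hR, natDegree_mul (monic_X_add_C μ).ne_zero hRmonic.ne_zero, natDegree_X_add_C] at h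
      omega
    refine ⟨fun j => if (j : ℕ) = n then 0 else R.coeff (n - 1 - (j : ℕ)), ?_, ?_, ?_⟩
    · show (if ((0 : Fin (n + 1)) : ℕ) = n then (0 : ℂ)
        else R.coeff (n - 1 - ((0 : Fin (n + 1)) : ℕ))) = 1
      rw [Fin.val_zero, if_neg (by omega), Nat.sub_zero, ← hRdeg]
      exact hRmonic.coeff_natDegree
    · simp [Fin.last]
    · intro j
      simp only []
      have hj := j.isLt
      have hcoeff : v j = ((X + C μ) * R).coeff (n - 1 - (j : ℕ)) := by
        rw [← hR, coeff_pOf]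
      rw [hcoeff, add_mul, coeff_add, coeff_C_mul]
      have hcs : (if ((j.castSucc : Fin (n+1)) : ℕ) = n then (0:ℂ)
          else R.coeff (n - 1 - ((j.castSucc : Fin (n+1)) : ℕ))) = R.coeff (n - 1 - (j : ℕ)) := by
        rw [if_neg (by simp; omega)]
        simp
      rw [hcs]
      have hXR : (X * R).coeff (n - 1 - (j : ℕ)) = (if ((j.succ : Fin (n+1)) : ℕ) = n then (0:ℂ)
          else R.coeff (n - 1 - ((j.succ : Fin (n+1)) : ℕ))) := by
        by_cases hjn : (j : ℕ) + 1 = n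
        · have : n - 1 - (j : ℕ) = 0 := by omega
          rw [this, if_pos (by simp [hjn])]
          simpa using mul_coeff_zero X R
        · have h1 : n - 1 - (j : ℕ) = (n - 1 - ((j : ℕ) + 1)) + 1 := by omega
          rw [h1, coeff_X_mul, if_neg (by simp [hjn])]
          simp
      rw [hXR]
      ring

lemma exists_lam (m : ℕ) (Q : Polynomial ℂ) (hQ : Q.Monic) (hd : Q.natDegree = m) :
    ∃ lam : Fin m → ℂ, Q = ∏ i : Fin m, (X + C (lam i)) := by
  have hsplits : Q.Splits := IsAlgClosed.splits Q
  have hcard : Multiset.card Q.roots = m := by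
    rw [splits_iff_card_roots.1 hsplits, hd]
  set l := Q.roots.toList with hl
  have hlen : l.length = m := by rw [hl, Multiset.length_toList, hcard]
  refine ⟨fun i => -(l.get (Fin.cast hlen.symm i)), ?_⟩
  have h1 : Q = (Q.roots.map fun a => X - C a).prod :=
    hsplits.eq_prod_roots_of_monic hQ
  have h2 : (Q.roots.map fun a => X - C a).prod = (l.map fun a => X - C a).prod := by
    conv_lhs => rw [← Multiset.coe_toList Q.roots]
    rw [Multiset.map_coe, Multiset.prod_coe]
  have h3 : (l.map fun a => X - C a).prod = ∏ i : Fin l.length, (X - C (l.get i)) := by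
    rw [← List.ofFn_getElem_eq_map l (fun a => X - C a), List.prod_ofFn]
    rfl
  have h4 : (∏ i : Fin l.length, (X - C (l.get i)))
      = ∏ i : Fin m, (X - C (l.get (Fin.cast hlen.symm i))) :=
    (Fintype.prod_equiv (finCongr hlen.symm) _ _ (fun i => rfl)).symm
  rw [h1, h2, h3, h4]
  apply Finset.prod_congr rfl
  intro i _
  rw [map_neg, ← sub_eq_add_neg]

/-- The linear part of the affine parametrization. -/
noncomputable def lmapOf (n k : ℕ) (M : Polynomial ℂ) :
    (Fin (n - k) → ℂ) →ₗ[ℂ] (Fin n → ℂ) where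
  toFun w := fun j =>
    (M * ∑ i : Fin (n - k), C (w i) * X ^ (n - k - 1 - (i : ℕ))).coeff (n - 1 - (j : ℕ))
  map_add' w w' := by
    funext j
    simp only [Pi.add_apply]
    rw [← coeff_add]
    congr 1
    have h : (∑ i : Fin (n - k), C (w i + w' i) * X ^ (n - k - 1 - (i : ℕ)))
        = (∑ i : Fin (n - k), C (w i) * X ^ (n - k - 1 - (i : ℕ)))
          + ∑ i : Fin (n - k), C (w' i) * X ^ (n - k - 1 - (i : ℕ)) := by
      rw [← Finset.sum_add_distrib]
      apply Finset.sum_congr rfl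
      intro i _
      rw [map_add]
      ring
    rw [h]
    ring
  map_smul' c w := by
    funext j
    simp only [Pi.smul_apply, smul_eq_mul, RingHom.id_apply]
    rw [← coeff_C_mul]
    congr 1
    have h : (∑ i : Fin (n - k), C (c * w i) * X ^ (n - k - 1 - (i : ℕ)))
        = C c * ∑ i : Fin (n - k), C (w i) * X ^ (n - k - 1 - (i : ℕ)) := by
      rw [Finset.mul_sum]
      apply Finset.sum_congr rfl
      intro i _
      rw [map_mul]
      ring
    rw [h]
    ring

/-- The affine parametrization of the intersection of hyperplanes. -/
noncomputable def amapOf (n k : ℕ) (M : Polynomial ℂ) :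
    (Fin (n - k) → ℂ) →ᵃ[ℂ] (Fin n → ℂ) where
  toFun w := fun j => (M * pOf (n - k) w).coeff (n - 1 - (j : ℕ))
  linear := lmapOf n k M
  map_vadd' p v := by
    funext j
    show (M * pOf (n - k) (v +ᵥ p)).coeff (n - 1 - (j : ℕ))
      = (lmapOf n k M) v j + (M * pOf (n - k) p).coeff (n - 1 - (j : ℕ))
    have hp : pOf (n - k) (v +ᵥ p)
        = (∑ i : Fin (n - k), C (v i) * X ^ (n - k - 1 - (i : ℕ))) + pOf (n - k) p := by
      rw [pOf, pOf]
      have h : (∑ i : Fin (n - k), C ((v +ᵥ p) i) * X ^ (n - k - 1 - (i : ℕ)))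
          = (∑ i : Fin (n - k), C (v i) * X ^ (n - k - 1 - (i : ℕ)))
            + ∑ i : Fin (n - k), C (p i) * X ^ (n - k - 1 - (i : ℕ)) := by
        rw [← Finset.sum_add_distrib]
        apply Finset.sum_congr rfl
        intro i _
        have : (v +ᵥ p) i = v i + p i := rfl
        rw [this, map_add]
        ring
      rw [h]
      ring
    rw [hp, mul_add, coeff_add]
    rfl

lemma lmapOf_inj (n k : ℕ) (hn : 1 ≤ n) (hkn : k ≤ n) (M : Polynomial ℂ)
    (hM0 : M ≠ 0) (hMdeg : M.natDegree = k) :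
    Function.Injective (lmapOf n k M) := by
  rw [← LinearMap.ker_eq_bot, LinearMap.ker_eq_bot']
  intro w hw
  set S : Polynomial ℂ := ∑ i : Fin (n - k), C (w i) * X ^ (n - k - 1 - (i : ℕ)) with hSdef
  have hdeg : (M * S).degree < (n : WithBot ℕ) := by
    rcases eq_or_ne S 0 with h | h
    · rw [h, mul_zero, degree_zero]
      exact WithBot.bot_lt_coe n
    · rw [degree_mul]
      have h1 : M.degree = (k : WithBot ℕ) := by
        rw [degree_eq_natDegree hM0, hMdeg]
      have h2 : S.degree < ((n - k : ℕ) : WithBot ℕ) := degree_sum_lt _ _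
      calc M.degree + S.degree < (k : WithBot ℕ) + ((n - k : ℕ) : WithBot ℕ) := by
            rw [h1]
            exact WithBot.add_lt_add_left (by simp) h2
        _ = ((k + (n - k) : ℕ) : WithBot ℕ) := by rw [Nat.cast_add]
        _ = (n : WithBot ℕ) := by congr 1; omega
  have hMS : M * S = 0 := by
    ext m
    rw [coeff_zero]
    by_cases hm : m < n
    · have := congrFun hw ⟨n - 1 - m, by omega⟩
      simp only [lmapOf, LinearMap.coe_mk, AddHom.coe_mk, Pi.zero_apply] at this
      rw [show n - 1 - (n - 1 - m) = m by omega] at this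
      exact this
    · exact coeff_eq_zero_of_degree_lt
        (lt_of_lt_of_le hdeg (by exact_mod_cast Nat.le_of_not_lt hm))
  have hS0 : S = 0 := (mul_eq_zero.mp hMS).resolve_left hM0
  funext i
  have := coeff_sum_aux (n - k) w i
  rw [← hSdef, hS0, coeff_zero] at this
  exact this.symm

/-- The hyperplanes `H(μ_j)` for pairwise distinct `μ_j` are in general
position: for `k ≤ n` distinct values `μ_1, …, μ_k`, the intersection
`H(μ_1) ∩ ⋯ ∩ H(μ_k)` equals `{π_n(μ_1,…,μ_k,λ) : λ ∈ ℂ^{n-k}}`, an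
`(n-k)`-dimensional affine subspace. -/
theorem hplanes_general_position (n k : ℕ) (hk : 1 ≤ k) (hkn : k ≤ n)
    (hn : 2 ≤ n) (μ : Fin k → ℂ) (hμ : Function.Injective μ) :
    (⋂ j, hplane n (μ j)) =
      {v | ∃ lam : Fin (n - k) → ℂ,
        v = symPoly n (fun i =>
          Fin.append μ lam (Fin.cast (Nat.add_sub_cancel' hkn).symm i))} ∧
    ∃ p : AffineSubspace ℂ (Fin n → ℂ),
      (p : Set (Fin n → ℂ)) = ⋂ j, hplane n (μ j) ∧
      Module.finrank ℂ p.direction = n - k := by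
  have hn1 : 1 ≤ n := by omega
  set M : Polynomial ℂ := ∏ j : Fin k, (X + C (μ j)) with hMdef
  have hMmonic : M.Monic := monic_prod_of_monic _ _ fun i _ => monic_X_add_C _
  have hMdeg : M.natDegree = k := by
    rw [hMdef, natDegree_prod _ _ fun i _ => (monic_X_add_C _).ne_zero]
    simp
  have happ : ∀ lam : Fin (n - k) → ℂ,
      (∏ i : Fin n, (X + C (Fin.append μ lam (Fin.cast (Nat.add_sub_cancel' hkn).symm i))))
        = M * ∏ i : Fin (n - k), (X + C (lam i)) := by
    intro lam
    have h1 : (∏ i : Fin n, (X + C (Fin.append μ lam (Fin.cast (Nat.add_sub_cancel' hkn).symm i))))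
        = ∏ i : Fin (k + (n - k)), (X + C (Fin.append μ lam i)) :=
      Fintype.prod_equiv (finCongr (Nat.add_sub_cancel' hkn).symm) _ _ (fun i => rfl)
    rw [h1, Fin.prod_univ_add]
    simp [Fin.append_left, Fin.append_right, hMdef]
  have hmem : ∀ v : Fin n → ℂ, v ∈ (⋂ j, hplane n (μ j)) ↔ M ∣ pOf n v := by
    intro v
    rw [Set.mem_iInter]
    constructor
    · intro h
      rw [hMdef]
      apply Finset.prod_dvd_of_coprime
      · intro a _ b _ hab
        have h2 := Polynomial.pairwise_coprime_X_sub_C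
          (s := fun j => -μ j) (fun x y hxy => hμ (neg_injective hxy)) hab
        simpa only [Function.onFun, map_neg, sub_neg_eq_add] using h2
      · intro j _
        exact (hplane_iff_dvd n hn1 (μ j) v).1 (h j)
    · intro h j
      refine (hplane_iff_dvd n hn1 (μ j) v).2
        (dvd_trans (Finset.dvd_prod_of_mem (fun j => X + C (μ j)) (Finset.mem_univ j)) ?_)
      rw [← hMdef]
      exact h
  have hset : (⋂ j, hplane n (μ j)) =
      {v | ∃ lam : Fin (n - k) → ℂ,
        v = symPoly n (fun i =>
          Fin.append μ lam (Fin.cast (Nat.add_sub_cancel' hkn).symm i))} := by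
    ext v
    rw [Set.mem_setOf_eq, hmem v]
    constructor
    · rintro ⟨Q, hQ⟩
      have hQmonic : Q.Monic := by
        have h := pOf_monic n v
        rw [hQ] at h
        exact hMmonic.of_mul_monic_left h
      have hQdeg : Q.natDegree = n - k := by
        have h := pOf_natDegree n v
        rw [hQ, natDegree_mul hMmonic.ne_zero hQmonic.ne_zero, hMdeg] at h
        omega
      obtain ⟨lam, hlam⟩ := exists_lam (n - k) Q hQmonic hQdeg
      refine ⟨lam, pOf_inj n ?_⟩
      rw [pOf_symPoly, happ, ← hlam, ← hQ]
    · rintro ⟨lam, rfl⟩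
      exact ⟨∏ i : Fin (n - k), (X + C (lam i)), by rw [pOf_symPoly, happ]⟩
  refine ⟨hset, AffineSubspace.map (amapOf n k M) ⊤, ?_, ?_⟩
  · rw [AffineSubspace.coe_map, AffineSubspace.top_coe, Set.image_univ, hset]
    ext v
    constructor
    · rintro ⟨w, rfl⟩
      have hQmonic := pOf_monic (n - k) w
      have hQdeg := pOf_natDegree (n - k) w
      obtain ⟨lam, hlam⟩ := exists_lam (n - k) (pOf (n - k) w) hQmonic hQdeg
      refine ⟨lam, ?_⟩
      funext j
      show (M * pOf (n - k) w).coeff (n - 1 - (j : ℕ)) = _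
      rw [hlam, ← happ, ← pOf_symPoly, coeff_pOf]
    · rintro ⟨lam, rfl⟩
      refine ⟨symPoly (n - k) lam, ?_⟩
      funext j
      show (M * pOf (n - k) (symPoly (n - k) lam)).coeff (n - 1 - (j : ℕ)) = _
      rw [pOf_symPoly, ← happ, ← pOf_symPoly, coeff_pOf]
  · rw [AffineSubspace.map_direction, AffineSubspace.direction_top, Submodule.map_top]
    have hlin : (amapOf n k M).linear = lmapOf n k M := rfl
    rw [hlin]
    rw [LinearMap.finrank_range_of_inj
      (lmapOf_inj n k hn1 hkn M hMmonic.ne_zero hMdeg)]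
    exact Module.finrank_fin_fun ℂ
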